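/- Let H be a complex Hilbert space and J a closed two-sided ideal in B(H). For every self-adjoint idempotent p in the quotient C*-algebra B(H)/J there exists an orthogonal projection P ∈ B(H) with π(P) = p, where π : B(H) → B(H)/J is the quotient map. -/

import Mathlib

/-- Let `H` be a complex Hilbert space and `J` a closed two-sided ideal of
`B(H)`. Every self-adjoint idempotent of the quotient `B(H)/J` lifts to an orthogonal
projection in `B(H)`. Formally: if `a : B(H)` represents a self-adjoint idempotent modulo `J`
(i.e. `a² - a ∈ J` and `a* - a ∈ J`), then there is a self-adjoint idempotent `P ∈ B(H)` with
`P - a ∈ J`, i.e. `π(P) = π(a)`. -/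
theorem projection_lifting_hilbert
    {H : Type*} [NormedAddCommGroup H] [InnerProductSpace ℂ H] [CompleteSpace H]
    (J : TwoSidedIdeal (H →L[ℂ] H)) (hJ : IsClosed (J : Set (H →L[ℂ] H)))
    (a : H →L[ℂ] H) (hidem : a * a - a ∈ J) (hsa : star a - a ∈ J) :
    ∃ P : H →L[ℂ] H, P * P = P ∧ IsSelfAdjoint P ∧ P - a ∈ J := by
  classical
  -- Step 1: self-adjoint lift `b` of the same class
  set b : H →L[ℂ] H := (1/2 : ℂ) • (a + star a) with hbdef
  have hb : IsSelfAdjoint b := by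
    simp only [hbdef, IsSelfAdjoint, star_smul, star_add, star_star]
    rw [show (star (1/2 : ℂ)) = (1/2 : ℂ) by norm_num]
    rw [add_comm]
  have hba : b - a ∈ J := by
    have h1 : b - a = ((1/2 : ℂ) • (1 : H →L[ℂ] H)) * (star a - a) := by
      rw [smul_mul_assoc, one_mul, hbdef]
      module
    rw [h1]
    exact J.mul_mem_left _ _ hsa
  have hbb : b * b - b ∈ J := by
    have h1 : b * b - b
        = b * (b - a) + (b - a) * a + (a * a - a) - (b - a) := by
      noncomm_ring
    rw [h1]
    exact J.sub_mem (J.add_mem (J.add_mem (J.mul_mem_left _ _ hba)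
      (J.mul_mem_right _ _ hba)) hidem) hba
  -- Step 2: `c = b - 1/2`
  set c : H →L[ℂ] H := b - algebraMap ℝ (H →L[ℂ] H) (1/2) with hcdef
  have halg : ∀ r : ℝ, IsSelfAdjoint (algebraMap ℝ (H →L[ℂ] H) r) := by
    intro r
    simp [IsSelfAdjoint, Algebra.algebraMap_eq_smul_one, star_smul]
  have hc : IsSelfAdjoint c := hb.sub (halg _)
  have hcc : c * c - algebraMap ℝ (H →L[ℂ] H) (1/4) = b * b - b := by
    rw [hcdef]
    rw [Algebra.algebraMap_eq_smul_one, Algebra.algebraMap_eq_smul_one]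
    simp only [sub_mul, mul_sub, smul_mul_assoc, mul_smul_comm, one_mul, mul_one, smul_smul]
    module
  have hccJ : c * c - algebraMap ℝ (H →L[ℂ] H) (1/4) ∈ J := hcc ▸ hbb
  -- Step 3: functional calculus elements
  set e : H →L[ℂ] H := cfc (fun t : ℝ => 2 * max t 0) c with hedef
  set f : H →L[ℂ] H := cfc (fun t : ℝ => 2 * max (-t) 0) c with hfdef
  set w : H →L[ℂ] H := cfc (fun t : ℝ => |t| - 1/2) c with hwdef
  have hcont : ContinuousOn (fun t : ℝ => (|t| + 1/2)⁻¹) (spectrum ℝ c) :=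
    (((continuous_abs.add continuous_const).inv₀
      (fun t => (by positivity : |t| + (1/2:ℝ) ≠ 0))).continuousOn)
  -- `w ∈ J`
  have hwu : w * cfc (fun t : ℝ => |t| + 1/2) c = c * c - algebraMap ℝ (H →L[ℂ] H) (1/4) := by
    rw [hwdef, ← cfc_mul (hf := by fun_prop) (hg := by fun_prop)]
    have h1 : cfc (fun t : ℝ => (|t| - 1/2) * (|t| + 1/2)) c
        = cfc (fun t : ℝ => t * t - 1/4) c := by
      refine cfc_congr fun t _ => ?_
      rw [show (|t| - 1/2) * (|t| + 1/2) = |t| * |t| - (1/4 : ℝ) by ring,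
        abs_mul_abs_self]
    rw [h1, cfc_sub (hf := by fun_prop) (hg := by fun_prop),
      cfc_mul (hf := by fun_prop) (hg := by fun_prop), cfc_id' ℝ c hc, cfc_const _ _ hc]
  have huv : cfc (fun t : ℝ => |t| + 1/2) c * cfc (fun t : ℝ => (|t| + 1/2)⁻¹) c = 1 := by
    rw [← cfc_mul (hf := by fun_prop) (hg := hcont)]
    have h1 : cfc (fun t : ℝ => (|t| + 1/2) * (|t| + 1/2)⁻¹) c
        = cfc (fun _ : ℝ => (1 : ℝ)) c :=
      cfc_congr fun t _ => mul_inv_cancel₀ (by positivity)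
    rw [h1, cfc_const _ _ hc, map_one]
  have hwJ : w ∈ J := by
    have h1 : w = (c * c - algebraMap ℝ (H →L[ℂ] H) (1/4))
        * cfc (fun t : ℝ => (|t| + 1/2)⁻¹) c := by
      rw [← hwu, mul_assoc, huv, mul_one]
    rw [h1]
    exact J.mul_mem_right _ _ hccJ
  -- algebraic identities
  have hef : e * f = 0 := by
    rw [hedef, hfdef, ← cfc_mul (hf := by fun_prop) (hg := by fun_prop)]
    have h1 : cfc (fun t : ℝ => (2 * max t 0) * (2 * max (-t) 0)) c
        = cfc (fun _ : ℝ => (0 : ℝ)) c := by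
      refine cfc_congr fun t _ => ?_
      rcases le_total t 0 with h | h
      · simp [max_eq_right h]
      · simp [max_eq_right (neg_nonpos.mpr h)]
    rw [h1, cfc_const _ _ hc, map_zero]
  have hesa : IsSelfAdjoint e := hedef ▸ cfc_predicate _ c
  have h1ef : (1 : H →L[ℂ] H) - e - f = ((-2 : ℝ) • (1 : H →L[ℂ] H)) * w := by
    rw [smul_mul_assoc, one_mul, hwdef, ← cfc_smul (-2 : ℝ) _ c (by fun_prop)]
    rw [hedef, hfdef, ← cfc_one (R := ℝ) c hc]
    rw [← cfc_sub (hf := by fun_prop) (hg := by fun_prop),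
      ← cfc_sub (hf := by fun_prop) (hg := by fun_prop)]
    refine cfc_congr fun t _ => ?_
    rcases le_total t 0 with h | h
    · simp only [Pi.one_apply, max_eq_right h, max_eq_left (neg_nonneg.mpr h),
        abs_of_nonpos h, smul_eq_mul]
      ring
    · simp only [Pi.one_apply, max_eq_left h, max_eq_right (neg_nonpos.mpr h),
        abs_of_nonneg h, smul_eq_mul]
      ring
  have h1efJ : (1 : H →L[ℂ] H) - e - f ∈ J := by
    rw [h1ef]; exact J.mul_mem_left _ _ hwJ
  have h1 : e - c = cfc (fun t : ℝ => |t|) c := by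
    have h2 : e = cfc (fun t : ℝ => |t| + t) c := by
      rw [hedef]
      refine cfc_congr fun t _ => ?_
      rcases le_total t 0 with h | h
      · rw [max_eq_right h, abs_of_nonpos h]; ring
      · rw [max_eq_left h, abs_of_nonneg h]; ring
    rw [h2, cfc_add (f := fun t : ℝ => |t|) (g := fun t : ℝ => t)
      (hf := by fun_prop) (hg := by fun_prop), cfc_id' ℝ c hc]
    abel
  have heb : e - b = w := by
    rw [hwdef, cfc_sub (hf := by fun_prop) (hg := by fun_prop), cfc_const _ _ hc, ← h1, hcdef]
    abel
  have heaJ : e - a ∈ J := by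
    have h3 : e - a = w + (b - a) := by rw [← heb]; abel
    rw [h3]; exact J.add_mem hwJ hba
  -- Step 4: the range projection of `e`
  set K : Submodule ℂ H := (LinearMap.range (e : H →ₗ[ℂ] H)).topologicalClosure with hKdef
  haveI hKc : CompleteSpace K := by
    rw [hKdef]
    exact (LinearMap.range (e : H →ₗ[ℂ] H)).isClosed_topologicalClosure.completeSpace_coe
  set P : H →L[ℂ] H := K.subtypeL.comp (Submodule.orthogonalProjectionOnto K) with hPdef
  have hPsa : IsSelfAdjoint P := isSelfAdjoint_starProjection K
  have hPmem : ∀ x : H, x ∈ K → P x = x := by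
    intro x hx
    show K.subtypeL (Submodule.orthogonalProjectionOnto K x) = x
    rw [show x = ((⟨x, hx⟩ : K) : H) from rfl, Submodule.orthogonalProjectionOnto_mem_subspace_eq_self]
    rfl
  have hPP : P * P = P := by
    ext x
    have hx : P x ∈ K := (Submodule.orthogonalProjectionOnto K x).2
    calc (P * P) x = P (P x) := rfl
    _ = P x := hPmem _ hx
  have hPe : P * e = e := by
    ext x
    have hx : e x ∈ K := (LinearMap.range (e : H →ₗ[ℂ] H)).le_topologicalClosure ⟨x, rfl⟩
    calc (P * e) x = P (e x) := rfl
    _ = e x := hPmem _ hx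
  have hPf : P * f = 0 := by
    ext x
    have hmem : f x ∈ Kᗮ := by
      rw [Submodule.mem_orthogonal]
      intro u hu
      have hclosed : IsClosed {u : H | (inner ℂ u (f x) : ℂ) = 0} :=
        isClosed_eq (Continuous.inner continuous_id continuous_const) continuous_const
      have hsubset : ((LinearMap.range (e : H →ₗ[ℂ] H) : Submodule ℂ H) : Set H) ⊆
          {u : H | (inner ℂ u (f x) : ℂ) = 0} := by
        rintro _ ⟨y, rfl⟩
        show (inner ℂ (e y) (f x) : ℂ) = 0
        have h4 : e = ContinuousLinearMap.adjoint e := by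
          rw [← ContinuousLinearMap.star_eq_adjoint, hesa]
        rw [show e y = (ContinuousLinearMap.adjoint e) y by rw [← h4],
          ContinuousLinearMap.adjoint_inner_left]
        have h5 : e (f x) = (e * f) x := rfl
        rw [h5, hef]
        simp
      have hu2 : u ∈ (LinearMap.range (e : H →ₗ[ℂ] H)).topologicalClosure := by
        rw [← hKdef]; exact hu
      have hu' : u ∈ closure ((LinearMap.range (e : H →ₗ[ℂ] H) : Submodule ℂ H) : Set H) := by
        rw [← Submodule.topologicalClosure_coe]; exact hu2
      exact closure_minimal hsubset hclosed hu'
    calc (P * f) x = K.subtypeL (Submodule.orthogonalProjectionOnto K (f x)) := rfl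
    _ = (0 : H →L[ℂ] H) x := by
        rw [Submodule.orthogonalProjectionOnto_apply_of_mem_orthogonal hmem]
        simp
  -- Step 5: conclusion
  refine ⟨P, hPP, hPsa, ?_⟩
  have hfinal : P - a = P * ((1 : H →L[ℂ] H) - e - f) + (P * f) + (e - a) := by
    rw [mul_sub, mul_sub, mul_one, hPe]
    abel
  rw [hfinal]
  exact J.add_mem (J.add_mem (J.mul_mem_left _ _ h1efJ) (hPf ▸ J.zero_mem)) heaJ
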